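/- arXiv:0808.2833 — 4 statements merged into one kernel-verified Lean document; each statement's English description precedes it below -/
import Mathlib

section
/- Let g_1,…,g_n : Σ* → ℝ be functions such that C(p) ⊆ span{g_1,…,g_n}, and let v_0, v_1, …, v_m ∈ Σ* satisfy (g_1(v_0),…,g_n(v_0)) ∈ span{(g_1(v_j),…,g_n(v_j)) : j=1,…,m} in ℝ^n. Then for every w ∈ Σ*, p_{w v_0} ∈ span{p_{w v_j} : j=1,…,m} in ℝ^{Σ*}. In particular (taking w = ∅), p_{v_0} ∈ span{p_{v_1},…,p_{v_m}}. -/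
/-- If the column space of `p` is contained in the span of `g 1, …, g n`, and the
vector `(g i v₀)_i` lies in the span of the vectors `(g i (vs j))_i`, then for every
word `w`, `p_{w v₀}` lies in the span of the `p_{w (vs j)}`.  In particular (w = ∅)
`p_{v₀}` lies in the span of the `p_{vs j}`. -/
theorem col_span_transfer {Sig : Type*} [Fintype Sig] (p : List Sig → ℝ)
    {n m : ℕ} (g : Fin n → (List Sig → ℝ))
    (hC : Submodule.span ℝ {f : List Sig → ℝ | ∃ w : List Sig, f = fun v => p (w ++ v)} ≤
          Submodule.span ℝ (Set.range g))
    (v₀ : List Sig) (vs : Fin m → List Sig)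
    (hv : (fun i => g i v₀) ∈
          Submodule.span ℝ (Set.range fun j => fun i => g i (vs j))) :
    (∀ w : List Sig,
      (fun u => p (u ++ (w ++ v₀))) ∈
        Submodule.span ℝ (Set.range fun j => fun u => p (u ++ (w ++ vs j)))) ∧
    (fun u => p (u ++ v₀)) ∈
      Submodule.span ℝ (Set.range fun j => fun u => p (u ++ vs j)) := by
  -- Extract coefficients from `hv`
  rw [Submodule.mem_span_range_iff_exists_fun ℝ] at hv
  obtain ⟨c, hc⟩ := hv
  -- Key: every q in span of g satisfies q v₀ = ∑ c j * q (vs j)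
  have key : ∀ q ∈ Submodule.span ℝ (Set.range g),
      q v₀ = ∑ j, c j * q (vs j) := by
    intro q hq
    induction hq using Submodule.span_induction with
    | mem x hx =>
        obtain ⟨i, rfl⟩ := hx
        have := congrFun hc i
        simp only [Finset.sum_apply, Pi.smul_apply, smul_eq_mul] at this
        exact this.symm
    | zero => simp
    | add x y _ _ hx hy =>
        simp only [Pi.add_apply, hx, hy, mul_add, Finset.sum_add_distrib]
    | smul a x _ hx =>
        simp only [Pi.smul_apply, smul_eq_mul, hx, Finset.mul_sum]
        exact Finset.sum_congr rfl fun j _ => by ring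
  have main : ∀ w : List Sig,
      (fun u => p (u ++ (w ++ v₀))) ∈
        Submodule.span ℝ (Set.range fun j => fun u => p (u ++ (w ++ vs j))) := by
    intro w
    have heq : (fun u => p (u ++ (w ++ v₀)))
        = ∑ j, c j • (fun u => p (u ++ (w ++ vs j))) := by
      funext u
      have hq : (fun v => p ((u ++ w) ++ v)) ∈ Submodule.span ℝ (Set.range g) :=
        hC (Submodule.subset_span ⟨u ++ w, rfl⟩)
      have := key _ hq
      simp only [List.append_assoc] at this
      simpa using this
    rw [heq]
    exact Submodule.sum_mem _ fun j _ =>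
      Submodule.smul_mem _ _ (Submodule.subset_span ⟨j, rfl⟩)
  refine ⟨main, ?_⟩
  simpa using main []
end

section
/- If in the situation of the previous lemma (g_1(v_0),…,g_n(v_0)) = Σ_j β_j (g_1(v_j),…,g_n(v_j)) with coefficients β_j independent of any word, then the identity p_{v_0} = Σ_j β_j p_{v_j} holds as functions on Σ*, i.e., p(u v_0) = Σ_j β_j p(u v_j) for every u ∈ Σ*. -/
/-- If `(g i v₀)_i = Σ_j β j • (g i (vs j))_i` with coefficients `β j` independent of
the word, and the column space of `p` is contained in the span of the `g i`, then
`p(u v₀) = Σ_j β j * p(u (vs j))` for every word `u`. -/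
theorem col_coeff_transfer {Sig : Type*} [Fintype Sig] (p : List Sig → ℝ)
    {n m : ℕ} (g : Fin n → (List Sig → ℝ))
    (hC : Submodule.span ℝ {f : List Sig → ℝ | ∃ w : List Sig, f = fun v => p (w ++ v)} ≤
          Submodule.span ℝ (Set.range g))
    (v₀ : List Sig) (vs : Fin m → List Sig) (β : Fin m → ℝ)
    (hβ : ∀ i : Fin n, g i v₀ = ∑ j : Fin m, β j * g i (vs j)) :
    ∀ u : List Sig, p (u ++ v₀) = ∑ j : Fin m, β j * p (u ++ vs j) := by
  intro u
  set L : (List Sig → ℝ) →ₗ[ℝ] ℝ :=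
    LinearMap.proj v₀ - ∑ j : Fin m, β j • LinearMap.proj (vs j) with hL
  have hLapp : ∀ f : List Sig → ℝ, L f = f v₀ - ∑ j : Fin m, β j * f (vs j) := by
    intro f
    simp [hL, LinearMap.sum_apply]
  have hker : Submodule.span ℝ (Set.range g) ≤ LinearMap.ker L := by
    rw [Submodule.span_le]
    rintro _ ⟨i, rfl⟩
    simp only [SetLike.mem_coe, LinearMap.mem_ker, hLapp, hβ i, sub_self]
  have hmem : (fun v => p (u ++ v)) ∈
      Submodule.span ℝ {f : List Sig → ℝ | ∃ w : List Sig, f = fun v => p (w ++ v)} :=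
    Submodule.subset_span ⟨u, rfl⟩
  have := hker (hC hmem)
  rw [LinearMap.mem_ker, hLapp] at this
  linarith
end

section
/- Let p and q be probability functions of two finitary processes over Σ, and let (I,J) be a basis for p, i.e., the matrix P_{IJ} = [p(wv)]_{v∈I, w∈J} has rank equal to dim(p) and |I| = |J| = dim(p). If (I,J) is also a basis for q and p(v) = q(v), p(wv) = q(wv), p(wav) = q(wav) for all v ∈ I, w ∈ J, a ∈ Σ, then p = q identically on Σ*. -/
/-- The row space `R(p)` of `p`. -/
def rowSpan {Sig : Type*} (p : List Sig → ℝ) : Submodule ℝ (List Sig → ℝ) :=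
  Submodule.span ℝ {f : List Sig → ℝ | ∃ v : List Sig, f = fun u => p (u ++ v)}

/-- The dimension of a finitary process. -/
noncomputable def dimP {Sig : Type*} (p : List Sig → ℝ) : ℕ :=
  Module.finrank ℝ (rowSpan p)

/-- `(I, J)` is a basis for `p`: the matrix `P_{IJ} = [p(wv)]` has rank `dim p`
and `|I| = |J| = dim p`. -/
def IsBasisPair {Sig : Type*} (p : List Sig → ℝ) (I J : Finset (List Sig)) : Prop :=
  (Matrix.of fun (w : J) (v : I) => p ((w : List Sig) ++ (v : List Sig))).rank = dimP p ∧
    I.card = dimP p ∧ J.card = dimP p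

namespace EquivCriterionAux

/-- Every shifted function `p_x` is a linear combination of the `p_v`, `v ∈ I`. -/
lemma span_eq {Sig : Type*} (p : List Sig → ℝ) (I J : Finset (List Sig))
    (hfin : FiniteDimensional ℝ (rowSpan p))
    (hrank : (Matrix.of fun (w : J) (v : I) =>
        p ((w : List Sig) ++ (v : List Sig))).rank = dimP p) :
    ∀ x : List Sig, ∃ c : I → ℝ,
      ∀ u : List Sig, p (u ++ x) = ∑ v : I, c v * p (u ++ (v : List Sig)) := by
  classical
  set W : Submodule ℝ (List Sig → ℝ) :=
    Submodule.span ℝ (Set.range fun v : I => (fun u => p (u ++ (v : List Sig)))) with hW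
  have hWle : W ≤ rowSpan p := by
    rw [hW, Submodule.span_le]
    rintro f ⟨v, rfl⟩
    exact Submodule.subset_span ⟨(v : List Sig), rfl⟩
  haveI : FiniteDimensional ℝ W := Submodule.finiteDimensional_of_le hWle
  set Rmap : (List Sig → ℝ) →ₗ[ℝ] (↥J → ℝ) :=
    LinearMap.funLeft ℝ ℝ (fun w : J => (w : List Sig)) with hR
  set M : Matrix J I ℝ :=
    Matrix.of fun (w : J) (v : I) => p ((w : List Sig) ++ (v : List Sig)) with hMdef
  have hmap : W.map Rmap = Submodule.span ℝ (Set.range M.transpose) := by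
    rw [hW, Submodule.map_span, ← Set.range_comp]
    rfl
  have hfr : Module.finrank ℝ (W.map Rmap) = dimP p := by
    rw [hmap, show Set.range M.transpose = Set.range M.col from rfl, ← Matrix.rank_eq_finrank_span_cols]
    exact hrank
  have hge : dimP p ≤ Module.finrank ℝ W := by
    rw [← hfr]
    exact Submodule.finrank_map_le Rmap W
  have hWeq : W = rowSpan p := Submodule.eq_of_le_of_finrank_le hWle hge
  intro x
  have hx : (fun u => p (u ++ x)) ∈ W := by
    rw [hWeq]; exact Submodule.subset_span ⟨x, rfl⟩
  rw [hW, Submodule.mem_span_range_iff_exists_fun] at hx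
  obtain ⟨c, hc⟩ := hx
  refine ⟨c, fun u => ?_⟩
  have := congrFun hc u
  simp only [Finset.sum_apply, Pi.smul_apply, smul_eq_mul] at this
  exact this.symm

/-- Coefficient vectors against the basis columns are unique. -/
lemma coeff_unique {Sig : Type*} (p : List Sig → ℝ) (I J : Finset (List Sig))
    (hrank : (Matrix.of fun (w : J) (v : I) =>
        p ((w : List Sig) ++ (v : List Sig))).rank = dimP p)
    (hI : I.card = dimP p)
    (c : I → ℝ)
    (hc : ∀ w : J, ∑ v : I, c v * p ((w : List Sig) ++ (v : List Sig)) = 0) :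
    c = 0 := by
  classical
  set M : Matrix J I ℝ :=
    Matrix.of fun (w : J) (v : I) => p ((w : List Sig) ++ (v : List Sig)) with hM
  have hMc : M.mulVecLin c = 0 := by
    funext w
    have := hc w
    simpa [hM, Matrix.mulVecLin, Matrix.mulVec, dotProduct, mul_comm] using this
  have hrn := LinearMap.finrank_range_add_finrank_ker M.mulVecLin
  rw [Module.finrank_fintype_fun_eq_card, Fintype.card_coe] at hrn
  have hrange : Module.finrank ℝ (LinearMap.range M.mulVecLin) = I.card := by
    have : M.rank = Module.finrank ℝ (LinearMap.range M.mulVecLin) := rfl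
    rw [← this, hrank, hI]
  have hker0 : Module.finrank ℝ (LinearMap.ker M.mulVecLin) = 0 := by omega
  have hker : LinearMap.ker M.mulVecLin = ⊥ := Submodule.finrank_eq_zero.mp hker0
  have : c ∈ LinearMap.ker M.mulVecLin := hMc
  rw [hker, Submodule.mem_bot] at this
  exact this

/-- Monotonicity under extension for nonnegative additive functions. -/
lemma mono_ext {Sig : Type*} [Fintype Sig] {r : List Sig → ℝ}
    (hr0 : ∀ u, 0 ≤ r u)
    (hradd : ∀ u : List Sig, ∑ a : Sig, r (u ++ [a]) = r u) :
    ∀ (x u : List Sig), r (u ++ x) ≤ r u := by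
  intro x
  induction x with
  | nil => intro u; simp
  | cons a x ih =>
    intro u
    have h1 : r ((u ++ [a]) ++ x) ≤ r (u ++ [a]) := ih (u ++ [a])
    have h2 : r (u ++ [a]) ≤ r u := by
      rw [← hradd u]
      exact Finset.single_le_sum (f := fun b : Sig => r (u ++ [b])) (fun b _ => hr0 _) (Finset.mem_univ a)
    calc r (u ++ a :: x) = r ((u ++ [a]) ++ x) := by rw [List.append_cons]
      _ ≤ r (u ++ [a]) := h1
      _ ≤ r u := h2

/-- The key positivity argument. -/
lemma main_ineq {Sig : Type*} [Fintype Sig] (r h : List Sig → ℝ)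
    (I : Finset (List Sig))
    (hr0 : ∀ u, 0 ≤ r u)
    (hradd : ∀ u : List Sig, ∑ a : Sig, r (u ++ [a]) = r u)
    (hhadd : ∀ u : List Sig, ∑ a : Sig, h (u ++ [a]) = h u)
    (β γ : I → ℝ)
    (hβ : ∀ u, r u = ∑ v : I, β v * r (u ++ (v : List Sig)))
    (hγ : ∀ u, h u = ∑ v : I, γ v * r (u ++ (v : List Sig)))
    (hvan : ∀ u, ∀ v : I, h (u ++ (v : List Sig)) = 0) :
    ∀ u, h u ≤ 0 := by
  classical
  intro u₀
  by_contra hcon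
  push_neg at hcon
  set C := ∑ v : I, |γ v| with hC
  have hCr : ∀ u, h u ≤ C * r u := by
    intro u
    rw [hγ u, hC, Finset.sum_mul]
    refine Finset.sum_le_sum fun v _ => ?_
    calc γ v * r (u ++ (v : List Sig)) ≤ |γ v| * r (u ++ (v : List Sig)) :=
          mul_le_mul_of_nonneg_right (le_abs_self _) (hr0 _)
      _ ≤ |γ v| * r u := mul_le_mul_of_nonneg_left (mono_ext hr0 hradd _ u) (abs_nonneg _)
  have hru₀ : 0 < r u₀ := by
    rcases lt_or_ge 0 (r u₀) with h' | h'
    · exact h'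
    · have hz : r u₀ = 0 := le_antisymm h' (hr0 u₀)
      have := hCr u₀
      rw [hz] at this
      simp at this
      linarith
  have hCpos : 0 < C := by nlinarith [hCr u₀]
  set T := {t : ℝ | 0 ≤ t ∧ ∀ u, t * h u ≤ r u} with hT
  have h0T : (0 : ℝ) ∈ T := ⟨le_rfl, fun u => by simpa using hr0 u⟩
  have hbdd : BddAbove T := by
    refine ⟨r u₀ / h u₀, fun t ht => ?_⟩
    rw [le_div_iff₀ hcon]
    exact ht.2 u₀
  set t₀ := sSup T with ht₀def
  have hinvT : (1 / C) ∈ T := by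
    refine ⟨by positivity, fun u => ?_⟩
    have := hCr u
    calc (1 / C) * h u ≤ (1 / C) * (C * r u) :=
          mul_le_mul_of_nonneg_left this (by positivity)
      _ = r u := by field_simp
  have ht₀pos : 0 < t₀ := lt_of_lt_of_le (by positivity) (le_csSup hbdd hinvT)
  have ht₀ : ∀ u, t₀ * h u ≤ r u := by
    intro u
    rcases le_or_gt (h u) 0 with hu | hu
    · nlinarith [hr0 u]
    · have hle : t₀ ≤ r u / h u :=
        csSup_le ⟨0, h0T⟩ (fun t ht => by rw [le_div_iff₀ hu]; exact ht.2 u)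
      calc t₀ * h u ≤ (r u / h u) * h u := by nlinarith
        _ = r u := by field_simp
  set B := ∑ v : I, |β v| with hB
  have hBnn : 0 ≤ B := Finset.sum_nonneg fun v _ => abs_nonneg _
  set δ := 1 / (C * (B + 1)) with hδ
  have hδpos : 0 < δ := by positivity
  have hnot : t₀ + δ ∉ T := fun hmem => by
    have := le_csSup hbdd hmem
    linarith
  have hex : ∃ u, ¬ ((t₀ + δ) * h u ≤ r u) := by
    by_contra hall
    push_neg at hall
    exact hnot ⟨by linarith, hall⟩
  obtain ⟨u₁, hu₁⟩ := hex
  push_neg at hu₁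
  have hh₁ : 0 < h u₁ := by nlinarith [ht₀ u₁]
  have hr₁ : 0 < r u₁ := lt_of_lt_of_le (by nlinarith) (ht₀ u₁)
  set r' : List Sig → ℝ := fun u => r u - t₀ * h u with hr'def
  have hr'0 : ∀ u, 0 ≤ r' u := fun u => by simp [hr'def]; linarith [ht₀ u]
  have hr'add : ∀ u : List Sig, ∑ a : Sig, r' (u ++ [a]) = r' u := by
    intro u
    simp only [hr'def]
    rw [Finset.sum_sub_distrib, hradd, ← Finset.mul_sum, hhadd]
  have hmono' := mono_ext hr'0 hr'add
  have hkey : r u₁ ≤ B * r' u₁ := by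
    calc r u₁ = ∑ v : I, β v * r (u₁ ++ (v : List Sig)) := hβ u₁
      _ = ∑ v : I, β v * r' (u₁ ++ (v : List Sig)) := by
          refine Finset.sum_congr rfl fun v _ => ?_
          have : r' (u₁ ++ (v : List Sig)) = r (u₁ ++ (v : List Sig)) := by
            simp [hr'def, hvan u₁ v]
          rw [this]
      _ ≤ ∑ v : I, |β v| * r' u₁ := by
          refine Finset.sum_le_sum fun v _ => ?_
          calc β v * r' (u₁ ++ (v : List Sig)) ≤ |β v| * r' (u₁ ++ (v : List Sig)) :=
                mul_le_mul_of_nonneg_right (le_abs_self _) (hr'0 _)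
            _ ≤ |β v| * r' u₁ := mul_le_mul_of_nonneg_left (hmono' _ _) (abs_nonneg _)
      _ = B * r' u₁ := by rw [hB, Finset.sum_mul]
  have hr'small : r' u₁ ≤ δ * (C * r u₁) := by
    have h1 : r' u₁ < δ * h u₁ := by
      simp only [hr'def]
      nlinarith
    nlinarith [hCr u₁]
  have hδC : δ * C = 1 / (B + 1) := by
    rw [hδ]
    field_simp
  have hfinal : r u₁ ≤ (B / (B + 1)) * r u₁ := by
    calc r u₁ ≤ B * r' u₁ := hkey
      _ ≤ B * (δ * (C * r u₁)) := mul_le_mul_of_nonneg_left hr'small hBnn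
      _ = (B / (B + 1)) * r u₁ := by
          rw [show δ * (C * r u₁) = δ * C * r u₁ by ring, hδC]
          ring
  have hlt : (B / (B + 1)) < 1 := by
    rw [div_lt_one (by linarith)]
    linarith
  nlinarith

end EquivCriterionAux

open EquivCriterionAux in
/-- If `(I,J)` is a basis for both finitary probability functions `p` and `q`, and
`p(v) = q(v)`, `p(wv) = q(wv)`, `p(wav) = q(wav)` for all `v ∈ I`, `w ∈ J`, `a ∈ Σ`,
then `p = q`. -/
theorem equivalence_criterion {Sig : Type*} [Fintype Sig]
    (p q : List Sig → ℝ)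
    (hp0 : p [] = 1) (hq0 : q [] = 1)
    (hpnn : ∀ v, 0 ≤ p v) (hqnn : ∀ v, 0 ≤ q v)
    (hpadd : ∀ w : List Sig, ∑ a : Sig, p (w ++ [a]) = p w)
    (hqadd : ∀ w : List Sig, ∑ a : Sig, q (w ++ [a]) = q w)
    (hpfin : FiniteDimensional ℝ (rowSpan p))
    (hqfin : FiniteDimensional ℝ (rowSpan q))
    (I J : Finset (List Sig))
    (hbp : IsBasisPair p I J) (hbq : IsBasisPair q I J)
    (h1 : ∀ v ∈ I, p v = q v)
    (h2 : ∀ v ∈ I, ∀ w ∈ J, p (w ++ v) = q (w ++ v))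
    (h3 : ∀ v ∈ I, ∀ w ∈ J, ∀ a : Sig, p (w ++ a :: v) = q (w ++ a :: v)) :
    p = q := by
  classical
  have L1p := span_eq p I J hpfin hbp.1
  have L1q := span_eq q I J hqfin hbq.1
  -- Step 3: p and q agree on all words with a suffix in I
  have step3 : ∀ u : List Sig, ∀ v ∈ I, p (u ++ v) = q (u ++ v) := by
    intro u
    induction u using List.reverseRecOn with
    | nil =>
      intro v hv
      simpa using h1 v hv
    | append_singleton u a ih =>
      intro v hv
      obtain ⟨c, hc⟩ := L1p (a :: v)
      obtain ⟨c', hc'⟩ := L1q (a :: v)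
      have hcc : c = c' := by
        have h0 : ∀ w : J, ∑ v' : I,
            (c v' - c' v') * p ((w : List Sig) ++ (v' : List Sig)) = 0 := by
          intro w
          have e1 := hc (w : List Sig)
          have e2 := hc' (w : List Sig)
          have e3 : p ((w : List Sig) ++ (a :: v)) = q ((w : List Sig) ++ (a :: v)) :=
            h3 v hv (w : List Sig) w.2 a
          have e4 : ∑ v' : I, c' v' * q ((w : List Sig) ++ (v' : List Sig))
              = ∑ v' : I, c' v' * p ((w : List Sig) ++ (v' : List Sig)) :=
            Finset.sum_congr rfl fun v' _ => by
              rw [h2 v' v'.2 (w : List Sig) w.2]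
          rw [e4] at e2
          have : ∑ v' : I, (c v' - c' v') * p ((w : List Sig) ++ (v' : List Sig))
              = (∑ v' : I, c v' * p ((w : List Sig) ++ (v' : List Sig)))
                - ∑ v' : I, c' v' * p ((w : List Sig) ++ (v' : List Sig)) := by
            rw [← Finset.sum_sub_distrib]
            exact Finset.sum_congr rfl fun v' _ => by ring
          rw [this, ← e1, ← e2, e3, sub_self]
        have := coeff_unique p I J hbp.1 hbp.2.1 (fun v' => c v' - c' v') h0
        funext v'
        have h5 := congrFun this v'
        simp only [Pi.zero_apply] at h5
        linarith
      have hass : (u ++ [a]) ++ v = u ++ (a :: v) := by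
        rw [List.append_assoc, List.singleton_append]
      rw [hass, hc u, hcc, hc' u]
      exact Finset.sum_congr rfl fun v' _ => by rw [ih (v' : List Sig) v'.2]
  -- coefficients for p and q themselves
  obtain ⟨β, hβ⟩ := L1p []
  obtain ⟨β', hβ'⟩ := L1q []
  have hβ2 : ∀ u, p u = ∑ v : I, β v * p (u ++ (v : List Sig)) := fun u => by
    have := hβ u; simpa using this
  have hβ'2 : ∀ u, q u = ∑ v : I, β' v * q (u ++ (v : List Sig)) := fun u => by
    have := hβ' u; simpa using this
  -- apply main inequality both ways
  have hsub1 : ∀ u, p u - q u ≤ 0 := by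
    refine main_ineq p (fun u => p u - q u) I hpnn hpadd
      (fun u => by rw [Finset.sum_sub_distrib, hpadd, hqadd]) β (fun v => β v - β' v)
      hβ2 (fun u => ?_) (fun u v => by simp [step3 u (v : List Sig) v.2])
    have e1 := hβ2 u
    have e2 := hβ'2 u
    have e3 : ∑ v : I, β' v * q (u ++ (v : List Sig))
        = ∑ v : I, β' v * p (u ++ (v : List Sig)) :=
      Finset.sum_congr rfl fun v _ => by rw [step3 u (v : List Sig) v.2]
    rw [e3] at e2
    have e5 : ∑ v : I, (β v - β' v) * p (u ++ (v : List Sig))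
        = (∑ v : I, β v * p (u ++ (v : List Sig)))
          - ∑ v : I, β' v * p (u ++ (v : List Sig)) := by
      rw [← Finset.sum_sub_distrib]
      exact Finset.sum_congr rfl fun v _ => by ring
    show p u - q u = _
    rw [e5, ← e1, ← e2]
  have hsub2 : ∀ u, q u - p u ≤ 0 := by
    refine main_ineq q (fun u => q u - p u) I hqnn hqadd
      (fun u => by rw [Finset.sum_sub_distrib, hqadd, hpadd]) β' (fun v => β' v - β v)
      hβ'2 (fun u => ?_) (fun u v => by simp [step3 u (v : List Sig) v.2])
    have e1 := hβ2 u
    have e2 := hβ'2 u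
    have e3 : ∑ v : I, β v * p (u ++ (v : List Sig))
        = ∑ v : I, β v * q (u ++ (v : List Sig)) :=
      Finset.sum_congr rfl fun v _ => by rw [step3 u (v : List Sig) v.2]
    rw [e3] at e1
    have e5 : ∑ v : I, (β' v - β v) * q (u ++ (v : List Sig))
        = (∑ v : I, β' v * q (u ++ (v : List Sig)))
          - ∑ v : I, β v * q (u ++ (v : List Sig)) := by
      rw [← Finset.sum_sub_distrib]
      exact Finset.sum_congr rfl fun v _ => by ring
    show q u - p u = _
    rw [e5, ← e2, ← e1]
  funext u
  have := hsub1 u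
  have := hsub2 u
  linarith
end

section
/- The dimension of a quantum random walk process is at most k², where k is the dimension of the underlying Hilbert space: p(v) := tr(T_v Q_{ψ_0}) satisfies dim span{p_v : v ∈ Σ*} ≤ k², where p_v(w) := p(wv) and T_v denotes the reversed composition T_{v_t}∘⋯∘T_{v_1}. -/
open Matrix

noncomputable def hermOf {k : ℕ} (R : Matrix (Fin k) (Fin k) ℝ) : Matrix (Fin k) (Fin k) ℂ :=
  fun i j => ⟨(R i j + R j i) / 2, (R i j - R j i) / 2⟩

theorem hermOf_add {k : ℕ} (R S : Matrix (Fin k) (Fin k) ℝ) :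
    hermOf (R + S) = hermOf R + hermOf S := by
  funext i j
  apply Complex.ext <;> simp [hermOf, Matrix.add_apply] <;> ring

theorem hermOf_smul {k : ℕ} (c : ℝ) (R : Matrix (Fin k) (Fin k) ℝ) :
    hermOf (c • R) = (c : ℂ) • hermOf R := by
  funext i j
  apply Complex.ext <;>
    simp [hermOf, Matrix.smul_apply, smul_eq_mul, Complex.mul_re, Complex.mul_im] <;> ring

/-- The dimension of a quantum random walk process is at most `k²`:
for `p(v) := Re tr(T_v Q_{ψ₀})` (with `T_v` the reversed composition of the `T_a`),
`dim span{p_v : v ∈ Σ*} ≤ k²`. -/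
theorem qrw_dimension_le {k : ℕ} {Sig : Type*} [Fintype Sig]
    (U : Matrix (Fin k) (Fin k) ℂ) (hU : Uᴴ * U = 1 ∧ U * Uᴴ = 1)
    (P : Sig → Matrix (Fin k) (Fin k) ℂ)
    (hPsa : ∀ a, (P a)ᴴ = P a) (hPidem : ∀ a, P a * P a = P a)
    (hPorth : ∀ a b, a ≠ b → P a * P b = 0)
    (hPsum : ∑ a : Sig, P a = 1)
    (ψ₀ : Fin k → ℂ) (hψ₀ : ∑ i, Complex.normSq (ψ₀ i) = 1)
    (p : List Sig → ℝ)
    (hp : ∀ v : List Sig,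
      p v = (Matrix.trace
        (v.foldl (fun Q a => (P a * U) * Q * (P a * U)ᴴ)
          (Matrix.vecMulVec ψ₀ (star ψ₀)))).re) :
    Module.rank ℝ
      (Submodule.span ℝ {f : List Sig → ℝ | ∃ v : List Sig, f = fun w => p (w ++ v)})
      ≤ (k ^ 2 : ℕ) := by
  classical
  set step : Matrix (Fin k) (Fin k) ℂ → Sig → Matrix (Fin k) (Fin k) ℂ :=
    fun Q a => (P a * U) * Q * (P a * U)ᴴ with hstep
  set Qw : List Sig → Matrix (Fin k) (Fin k) ℂ :=
    fun w => w.foldl step (Matrix.vecMulVec ψ₀ (star ψ₀)) with hQw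
  set Cv : List Sig → Matrix (Fin k) (Fin k) ℂ :=
    fun v => v.foldl (fun C a => (P a * U) * C) 1 with hCv
  -- fold of left-multiplications
  have fold1 : ∀ (v : List Sig) (X : Matrix (Fin k) (Fin k) ℂ),
      v.foldl (fun C a => (P a * U) * C) X = Cv v * X := by
    intro v
    induction v with
    | nil => intro X; simp [hCv]
    | cons a v ih =>
      intro X
      simp only [List.foldl_cons, hCv]
      rw [ih ((P a * U) * X), ih ((P a * U) * 1)]
      simp [Matrix.mul_assoc]
  have fold2 : ∀ (v : List Sig) (Q : Matrix (Fin k) (Fin k) ℂ),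
      v.foldl step Q = Cv v * Q * (Cv v)ᴴ := by
    intro v
    induction v with
    | nil => intro Q; simp [hCv]
    | cons a v ih =>
      intro Q
      simp only [List.foldl_cons, hCv]
      rw [ih (step Q a), fold1 v (P a * U * 1)]
      simp [hstep, Matrix.mul_assoc, conjTranspose_mul]
  let L : Matrix (Fin k) (Fin k) ℝ →ₗ[ℝ] (List Sig → ℝ) :=
    { toFun := fun R w => (Matrix.trace (hermOf R * Qw w)).re
      map_add' := by
        intro R S; funext w
        simp [hermOf_add, Matrix.add_mul, Matrix.trace_add]
      map_smul' := by
        intro c R; funext w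
        simp [hermOf_smul, Matrix.smul_mul, Matrix.trace_smul, smul_eq_mul,
          Complex.mul_re, Complex.ofReal_re, Complex.ofReal_im] }
  have hsub : {f : List Sig → ℝ | ∃ v : List Sig, f = fun w => p (w ++ v)}
      ⊆ (LinearMap.range L : Set (List Sig → ℝ)) := by
    rintro f ⟨v, rfl⟩
    have hA : ((Cv v)ᴴ * Cv v)ᴴ = (Cv v)ᴴ * Cv v := by
      simp [conjTranspose_mul]
    have hconj : ∀ i j, ((Cv v)ᴴ * Cv v) j i = (starRingEnd ℂ) (((Cv v)ᴴ * Cv v) i j) := by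
      intro i j
      conv_lhs => rw [← hA]
      simp [Matrix.conjTranspose_apply]
    refine ⟨fun i j => ((((Cv v)ᴴ * Cv v) i j).re + (((Cv v)ᴴ * Cv v) i j).im), ?_⟩
    have hH : hermOf (fun i j => ((((Cv v)ᴴ * Cv v) i j).re + (((Cv v)ᴴ * Cv v) i j).im))
        = (Cv v)ᴴ * Cv v := by
      funext i j
      apply Complex.ext <;>
      · simp only [hermOf]
        rw [hconj i j]
        simp
        try ring
    funext w
    show (Matrix.trace (hermOf _ * Qw w)).re = p (w ++ v)
    rw [hH, hp (w ++ v), List.foldl_append, fold2 v (Qw w),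
      Matrix.trace_mul_cycle (Cv v) (Qw w) ((Cv v)ᴴ)]
  have h1 : Submodule.span ℝ {f : List Sig → ℝ | ∃ v : List Sig, f = fun w => p (w ++ v)}
      ≤ LinearMap.range L := Submodule.span_le.mpr hsub
  have r1 := Submodule.rank_mono h1
  have r3 : Module.rank ℝ (Matrix (Fin k) (Fin k) ℝ) = ((k ^ 2 : ℕ) : Cardinal) := by
    rw [rank_matrix'']
    simp [pow_two]
  have r2 := lift_rank_range_le L
  rw [r3] at r2
  simp only [Cardinal.lift_natCast, Cardinal.lift_id'] at r2
  exact r1.trans r2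
end
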